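/- The multi-sample Jensen lower bounds converge to the log marginal likelihood: the sequence n ↦ L_n tends to log m as n → ∞. -/

import Mathlib

open Finset Real

lemma sum_prod_fn {C : Type*} [Fintype C] {n : ℕ} (h : Fin n → C → ℝ) :
    ∑ cs : Fin n → C, ∏ k, h k (cs k) = ∏ k, ∑ c, h k c := by
  rw [Finset.prod_univ_sum, Fintype.piFinset_univ]

lemma marg1 {C : Type*} [Fintype C] {n : ℕ} (p f : C → ℝ) (hp1 : ∑ c, p c = 1) (i : Fin n) :
    ∑ cs : Fin n → C, (∏ j, p (cs j)) * f (cs i) = ∑ c, p c * f c := by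
  have h := sum_prod_fn (fun k c => p c * (if k = i then f c else 1))
  calc ∑ cs : Fin n → C, (∏ j, p (cs j)) * f (cs i)
      = ∑ cs : Fin n → C, ∏ k, (p (cs k) * if k = i then f (cs k) else 1) := by
        refine Finset.sum_congr rfl fun cs _ => ?_
        rw [Finset.prod_mul_distrib, Finset.prod_ite_eq' univ i (fun k => f (cs k))]
        simp
    _ = ∏ k : Fin n, ∑ c, p c * (if k = i then f c else 1) := h
    _ = ∏ k : Fin n, (if k = i then ∑ c, p c * f c else 1) := by
        refine Finset.prod_congr rfl fun k _ => ?_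
        split_ifs <;> simp [hp1]
    _ = ∑ c, p c * f c := by
        rw [Finset.prod_ite_eq' univ i (fun _ => ∑ c, p c * f c)]; simp

lemma marg2 {C : Type*} [Fintype C] {n : ℕ} (p f : C → ℝ) (hp1 : ∑ c, p c = 1)
    {i j : Fin n} (hij : i ≠ j) :
    ∑ cs : Fin n → C, (∏ k, p (cs k)) * (f (cs i) * f (cs j)) =
      (∑ c, p c * f c) * (∑ c, p c * f c) := by
  have h := sum_prod_fn (fun k c => p c * ((if k = i then f c else 1) * (if k = j then f c else 1)))
  calc ∑ cs : Fin n → C, (∏ k, p (cs k)) * (f (cs i) * f (cs j))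
      = ∑ cs : Fin n → C, ∏ k,
          (p (cs k) * ((if k = i then f (cs k) else 1) * (if k = j then f (cs k) else 1))) := by
        refine Finset.sum_congr rfl fun cs _ => ?_
        rw [Finset.prod_mul_distrib, Finset.prod_mul_distrib,
          Finset.prod_ite_eq' univ i (fun k => f (cs k)),
          Finset.prod_ite_eq' univ j (fun k => f (cs k))]
        simp [mul_assoc]
    _ = ∏ k : Fin n, ∑ c, p c * ((if k = i then f c else 1) * (if k = j then f c else 1)) := h
    _ = ∏ k : Fin n, ((if k = i then ∑ c, p c * f c else 1) * (if k = j then ∑ c, p c * f c else 1)) := by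
        refine Finset.prod_congr rfl fun k _ => ?_
        rcases eq_or_ne k i with rfl | hki
        · simp [hij, hp1]
        · rcases eq_or_ne k j with rfl | hkj
          · simp [hki, hp1]
          · simp [hki, hkj, hp1]
    _ = (∑ c, p c * f c) * (∑ c, p c * f c) := by
        rw [Finset.prod_mul_distrib,
          Finset.prod_ite_eq' univ i (fun _ => ∑ c, p c * f c),
          Finset.prod_ite_eq' univ j (fun _ => ∑ c, p c * f c)]
        simp

lemma sumW {C : Type*} [Fintype C] {n : ℕ} (p : C → ℝ) (hp1 : ∑ c, p c = 1) :
    ∑ cs : Fin n → C, ∏ k, p (cs k) = 1 := by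
  have h := sum_prod_fn (fun _ : Fin n => p)
  simpa [hp1] using h

lemma sqsum {C : Type*} [Fintype C] {n : ℕ} (p g : C → ℝ) (hp1 : ∑ c, p c = 1)
    (hg : ∑ c, p c * g c = 0) :
    ∑ cs : Fin n → C, (∏ k, p (cs k)) * (∑ i, g (cs i))^2
      = n * ∑ c, p c * (g c * g c) := by
  calc ∑ cs : Fin n → C, (∏ k, p (cs k)) * (∑ i, g (cs i))^2
      = ∑ cs : Fin n → C, ∑ i, ∑ j, (∏ k, p (cs k)) * (g (cs i) * g (cs j)) := by
        refine Finset.sum_congr rfl fun cs _ => ?_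
        rw [sq, Finset.sum_mul_sum, Finset.mul_sum]
        refine Finset.sum_congr rfl fun i _ => ?_
        rw [Finset.mul_sum]
    _ = ∑ i : Fin n, ∑ j : Fin n, ∑ cs : Fin n → C, (∏ k, p (cs k)) * (g (cs i) * g (cs j)) := by
        rw [Finset.sum_comm]
        exact Finset.sum_congr rfl fun i _ => Finset.sum_comm
    _ = ∑ i : Fin n, ∑ j : Fin n, (if i = j then ∑ c, p c * (g c * g c) else 0) := by
        refine Finset.sum_congr rfl fun i _ => Finset.sum_congr rfl fun j _ => ?_
        rcases eq_or_ne i j with rfl | hij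
        · simp only [if_pos rfl]
          exact marg1 p (fun c => g c * g c) hp1 i
        · rw [if_neg hij, marg2 p g hp1 hij, hg, mul_zero]
    _ = n * ∑ c, p c * (g c * g c) := by simp

lemma log_lb {t y m : ℝ} (ht : 0 < t) (hty : t ≤ y) (htm : t ≤ m) :
    Real.log m + (y - m)/m - (y - m)^2/t^2 ≤ Real.log y := by
  have hy : 0 < y := lt_of_lt_of_le ht hty
  have hm : 0 < m := lt_of_lt_of_le ht htm
  have h1 : Real.log (m / y) ≤ m / y - 1 := Real.log_le_sub_one_of_pos (by positivity)
  rw [Real.log_div hm.ne' hy.ne'] at h1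
  have hty2 : t^2 ≤ m * y := by nlinarith
  have key : (y - m)/m - (y - m)^2/t^2 ≤ (y - m)/y := by
    rw [div_sub_div _ _ hm.ne' (by positivity : (t:ℝ)^2 ≠ 0), div_le_div_iff₀ (by positivity) hy]
    nlinarith [sq_nonneg (y - m)]
  have h2 : Real.log m - Real.log y ≤ (m - y)/y := by
    calc Real.log m - Real.log y ≤ m/y - 1 := h1
      _ = (m - y)/y := by field_simp
  have hne : (m - y)/y = -((y - m)/y) := by ring
  linarith

lemma log_ub {y m : ℝ} (hy : 0 < y) (hm : 0 < m) :
    Real.log y ≤ Real.log m + (y - m)/m := by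
  have h1 : Real.log (y / m) ≤ y / m - 1 := Real.log_le_sub_one_of_pos (by positivity)
  rw [Real.log_div hy.ne' hm.ne'] at h1
  have : y/m - 1 = (y - m)/m := by field_simp
  linarith [this ▸ h1]


/-- The multi-sample Jensen lower bounds converge to the log marginal likelihood:
`L_n → log m` as `n → ∞`. -/
theorem multi_sample_jensen_lower_bound_tendsto
    {C : Type*} [Fintype C] [Nonempty C]
    (p ρ : C → ℝ)
    (hp0 : ∀ c, 0 ≤ p c) (hp1 : ∑ c, p c = 1)
    (hρ0 : ∀ c, 0 < ρ c) (hρ1 : ∀ c, ρ c ≤ 1) :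
    Filter.Tendsto
      (fun n : ℕ =>
        ∑ cs : Fin n → C, (∏ i, p (cs i)) * Real.log ((1 / (n : ℝ)) * ∑ i, ρ (cs i)))
      Filter.atTop (nhds (Real.log (∑ c, p c * ρ c))) := by
  classical
  set m := ∑ c, p c * ρ c with hmdef
  set t := Finset.univ.inf' Finset.univ_nonempty ρ with htdef
  have ht0 : 0 < t := (Finset.lt_inf'_iff _).mpr fun c _ => hρ0 c
  have htρ : ∀ c, t ≤ ρ c := fun c => Finset.inf'_le _ (Finset.mem_univ c)
  have htm : t ≤ m := by
    calc t = ∑ c, p c * t := by rw [← Finset.sum_mul, hp1, one_mul]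
    _ ≤ ∑ c, p c * ρ c := Finset.sum_le_sum fun c _ =>
        mul_le_mul_of_nonneg_left (htρ c) (hp0 c)
  have hm0 : 0 < m := lt_of_lt_of_le ht0 htm
  set g : C → ℝ := fun c => ρ c - m with hgdef
  have hg : ∑ c, p c * g c = 0 := by
    simp only [hgdef, mul_sub]
    rw [Finset.sum_sub_distrib, ← Finset.sum_mul, hp1, one_mul, ← hmdef, sub_self]
  set V := ∑ c, p c * (g c * g c) with hVdef
  have hV0 : 0 ≤ V := Finset.sum_nonneg fun c _ => mul_nonneg (hp0 c) (mul_self_nonneg _)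
  -- bounds for n ≥ 1
  have hbounds : ∀ n : ℕ, 1 ≤ n →
      Real.log m - (V/t^2)/n ≤
        (∑ cs : Fin n → C, (∏ i, p (cs i)) * Real.log ((1 / (n : ℝ)) * ∑ i, ρ (cs i))) ∧
      (∑ cs : Fin n → C, (∏ i, p (cs i)) * Real.log ((1 / (n : ℝ)) * ∑ i, ρ (cs i)))
        ≤ Real.log m := by
    intro n hn
    have hn0 : (0:ℝ) < n := by exact_mod_cast hn
    have hWsum := sumW (n := n) p hp1
    have hW0 : ∀ cs : Fin n → C, 0 ≤ ∏ k, p (cs k) :=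
      fun cs => Finset.prod_nonneg fun k _ => hp0 _
    have hE1 : ∑ cs : Fin n → C, (∏ k, p (cs k)) * (∑ i, ρ (cs i)) = n * m := by
      calc ∑ cs : Fin n → C, (∏ k, p (cs k)) * ∑ i, ρ (cs i)
          = ∑ cs : Fin n → C, ∑ i, (∏ k, p (cs k)) * ρ (cs i) := by
            exact Finset.sum_congr rfl fun cs _ => Finset.mul_sum _ _ _
        _ = ∑ i : Fin n, ∑ cs : Fin n → C, (∏ k, p (cs k)) * ρ (cs i) := Finset.sum_comm
        _ = ∑ _i : Fin n, m := Finset.sum_congr rfl fun i _ => marg1 p ρ hp1 i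
        _ = n * m := by simp
    have hE2 := sqsum (n := n) p g hp1 hg
    have hy : ∀ cs : Fin n → C, t ≤ (1/(n:ℝ)) * ∑ i, ρ (cs i) := by
      intro cs
      have h1 : (n:ℝ) * t ≤ ∑ i, ρ (cs i) := by
        calc (n:ℝ)*t = ∑ _i : Fin n, t := by simp [mul_comm]
        _ ≤ ∑ i, ρ (cs i) := Finset.sum_le_sum fun i _ => htρ _
      rw [one_div, inv_mul_eq_div, le_div_iff₀ hn0]
      linarith
    have hcenter : ∑ cs : Fin n → C,
        (∏ k, p (cs k)) * ((1/(n:ℝ)) * (∑ i, ρ (cs i)) - m) = 0 := by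
      have h : ∀ cs : Fin n → C, (∏ k, p (cs k)) * ((1/(n:ℝ)) * (∑ i, ρ (cs i)) - m)
          = (1/(n:ℝ)) * ((∏ k, p (cs k)) * ∑ i, ρ (cs i)) - (∏ k, p (cs k)) * m := by
        intro cs; ring
      rw [Finset.sum_congr rfl (fun cs _ => h cs), Finset.sum_sub_distrib,
        ← Finset.mul_sum, hE1, ← Finset.sum_mul, hWsum]
      field_simp; ring
    have hyg : ∀ cs : Fin n → C,
        (1/(n:ℝ)) * (∑ i, ρ (cs i)) - m = (1/(n:ℝ)) * ∑ i, g (cs i) := by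
      intro cs
      simp only [hgdef]
      rw [Finset.sum_sub_distrib]
      simp only [Finset.sum_const, Finset.card_univ, Fintype.card_fin, nsmul_eq_mul]
      field_simp
    have hsq : ∑ cs : Fin n → C,
        (∏ k, p (cs k)) * ((1/(n:ℝ)) * (∑ i, ρ (cs i)) - m)^2 = V / n := by
      calc ∑ cs : Fin n → C, (∏ k, p (cs k)) * ((1/(n:ℝ)) * (∑ i, ρ (cs i)) - m)^2
          = ∑ cs : Fin n → C, (1/(n:ℝ))^2 * ((∏ k, p (cs k)) * (∑ i, g (cs i))^2) := by
            refine Finset.sum_congr rfl fun cs _ => ?_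
            rw [hyg cs, mul_pow]; ring
        _ = (1/(n:ℝ))^2 * (n * V) := by rw [← Finset.mul_sum, hE2]
        _ = V / n := by field_simp
    constructor
    · -- lower bound
      have hstep : ∑ cs : Fin n → C, (∏ k, p (cs k)) *
          (Real.log m + ((1/(n:ℝ)) * (∑ i, ρ (cs i)) - m)/m
            - ((1/(n:ℝ)) * (∑ i, ρ (cs i)) - m)^2/t^2)
          ≤ ∑ cs : Fin n → C, (∏ i, p (cs i)) * Real.log ((1 / (n : ℝ)) * ∑ i, ρ (cs i)) := by
        refine Finset.sum_le_sum fun cs _ => ?_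
        exact mul_le_mul_of_nonneg_left (log_lb ht0 (hy cs) htm) (hW0 cs)
      refine le_trans (le_of_eq ?_) hstep
      have h : ∀ cs : Fin n → C, (∏ k, p (cs k)) *
          (Real.log m + ((1/(n:ℝ)) * (∑ i, ρ (cs i)) - m)/m
            - ((1/(n:ℝ)) * (∑ i, ρ (cs i)) - m)^2/t^2)
          = (∏ k, p (cs k)) * Real.log m
            + ((∏ k, p (cs k)) * ((1/(n:ℝ)) * (∑ i, ρ (cs i)) - m))/m
            - ((∏ k, p (cs k)) * ((1/(n:ℝ)) * (∑ i, ρ (cs i)) - m)^2)/t^2 := by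
        intro cs; ring
      rw [Finset.sum_congr rfl (fun cs _ => h cs), Finset.sum_sub_distrib,
        Finset.sum_add_distrib, ← Finset.sum_div, ← Finset.sum_div, hcenter, hsq,
        ← Finset.sum_mul, hWsum, zero_div, one_mul, add_zero, div_div, div_div]
      ring_nf
    · -- upper bound
      have hstep : ∑ cs : Fin n → C, (∏ i, p (cs i)) * Real.log ((1 / (n : ℝ)) * ∑ i, ρ (cs i))
          ≤ ∑ cs : Fin n → C, (∏ k, p (cs k)) *
            (Real.log m + ((1/(n:ℝ)) * (∑ i, ρ (cs i)) - m)/m) := by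
        refine Finset.sum_le_sum fun cs _ => ?_
        exact mul_le_mul_of_nonneg_left (log_ub (lt_of_lt_of_le ht0 (hy cs)) hm0) (hW0 cs)
      refine le_trans hstep (le_of_eq ?_)
      have h : ∀ cs : Fin n → C, (∏ k, p (cs k)) *
          (Real.log m + ((1/(n:ℝ)) * (∑ i, ρ (cs i)) - m)/m)
          = (∏ k, p (cs k)) * Real.log m
            + ((∏ k, p (cs k)) * ((1/(n:ℝ)) * (∑ i, ρ (cs i)) - m))/m := by
        intro cs; ring
      rw [Finset.sum_congr rfl (fun cs _ => h cs), Finset.sum_add_distrib,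
        ← Finset.sum_div, hcenter, ← Finset.sum_mul, hWsum, zero_div, one_mul, add_zero]
  have hlim : Filter.Tendsto (fun n : ℕ => Real.log m - (V/t^2)/n)
      Filter.atTop (nhds (Real.log m)) := by
    have h0 := tendsto_const_div_atTop_nhds_zero_nat (V/t^2)
    simpa using (tendsto_const_nhds (x := Real.log m) (f := Filter.atTop)).sub h0
  refine tendsto_of_tendsto_of_tendsto_of_le_of_le' hlim tendsto_const_nhds ?_ ?_
  · filter_upwards [Filter.eventually_ge_atTop 1] with n hn
    exact (hbounds n hn).1
  · filter_upwards [Filter.eventually_ge_atTop 1] with n hn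
    exact (hbounds n hn).2
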